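/- For every DBM D over n clocks, canonicalization only decreases bounds and preserves the zone: Canon(D) i j ≤ D i j for all i, j, and ⟦Canon(D)⟧ = ⟦D⟧. -/
import Mathlib


/-- A DBM over `n` clocks: index `0` is the reference clock. -/
abbrev DBM (n : ℕ) := Fin (n + 1) → Fin (n + 1) → WithTop ℝ

/-- The zone of a DBM. -/
def Zone {n : ℕ} (D : DBM n) : Set (Fin (n + 1) → ℝ) :=
  {v | v 0 = 0 ∧ ∀ i j, ((v i - v j : ℝ) : WithTop ℝ) ≤ D i j}

/-- Weight of the path `p 0, p 1, …, p m` in `D`, computed in `WithTop ℝ`. -/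
def pathWeight {n : ℕ} (D : DBM n) (p : ℕ → Fin (n + 1)) (m : ℕ) : WithTop ℝ :=
  ∑ k ∈ Finset.range m, D (p k) (p (k + 1))

/-- Canonicalization: `Canon D i j` is the minimum weight over all paths from `i` to `j`
with at most `n + 1` edges (the minimum of a finite nonempty set in `WithTop ℝ`). -/
noncomputable def Canon {n : ℕ} (D : DBM n) : DBM n := fun i j =>
  sInf {w | ∃ m p, 1 ≤ m ∧ m ≤ n + 1 ∧ p 0 = i ∧ p m = j ∧ w = pathWeight D p m}

lemma pathSet_finite {n : ℕ} (D : DBM n) (i j : Fin (n+1)) :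
    {w | ∃ m p, 1 ≤ m ∧ m ≤ n + 1 ∧ p 0 = i ∧ p m = j ∧ w = pathWeight D p m}.Finite := by
  apply Set.Finite.subset (Set.finite_range
    (fun mq : Fin (n+2) × (Fin (n+2) → Fin (n+1)) =>
      pathWeight D (fun k => mq.2 ⟨min k (n+1), by omega⟩) mq.1))
  rintro w ⟨m, p, hm1, hm2, _, _, rfl⟩
  refine ⟨(⟨m, by omega⟩, fun a => p a), ?_⟩
  simp only [pathWeight]
  apply Finset.sum_congr rfl
  intro k hk
  simp only [Finset.mem_range] at hk
  congr 2 <;> simp <;> omega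

lemma bdd {n : ℕ} (D : DBM n) (i j : Fin (n+1)) :
    BddBelow {w | ∃ m p, 1 ≤ m ∧ m ≤ n + 1 ∧ p 0 = i ∧ p m = j ∧ w = pathWeight D p m} :=
  (pathSet_finite D i j).bddBelow

lemma mem_pathSet {n : ℕ} (D : DBM n) (i j : Fin (n+1)) :
    D i j ∈ {w | ∃ m p, 1 ≤ m ∧ m ≤ n + 1 ∧ p 0 = i ∧ p m = j ∧ w = pathWeight D p m} := by
  refine ⟨1, fun k => if k = 0 then i else j, le_refl 1, by omega, by simp, by simp, ?_⟩
  simp [pathWeight]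

lemma canon_le {n : ℕ} (D : DBM n) (i j : Fin (n+1)) : Canon D i j ≤ D i j :=
  csInf_le (bdd D i j) (mem_pathSet D i j)

/-- canonicalization only decreases bounds and preserves the zone. -/
theorem canon_le_and_zone_eq {n : ℕ} (D : DBM n) :
    (∀ i j, Canon D i j ≤ D i j) ∧ Zone (Canon D) = Zone D := by
  refine ⟨canon_le D, Set.Subset.antisymm ?_ ?_⟩
  · rintro v ⟨h0, h⟩
    exact ⟨h0, fun i j => (h i j).trans (canon_le D i j)⟩
  · rintro v ⟨h0, h⟩
    refine ⟨h0, fun i j => le_csInf ⟨_, mem_pathSet D i j⟩ ?_⟩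
    rintro w ⟨m, p, hm1, hm2, hp0, hpm, rfl⟩
    have key : ((v i - v j : ℝ) : WithTop ℝ)
        = ∑ k ∈ Finset.range m, ((v (p k) - v (p (k+1)) : ℝ) : WithTop ℝ) := by
      have h1 : v i - v j = ∑ k ∈ Finset.range m, (v (p k) - v (p (k+1))) := by
        rw [Finset.sum_range_sub' (fun k => v (p k)) m, hp0, hpm]
      rw [h1]
      push_cast
      rfl
    rw [key, pathWeight]
    exact Finset.sum_le_sum fun k _ => h (p k) (p (k+1))
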